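/- Let T be a triangulation of a convex polygon and let e_1, e_2 be two independent diagonals of T. Then e_2 is still a diagonal of the triangulation obtained by flipping e_1 in T, and flipping e_1 and then e_2 yields the same triangulation as flipping e_2 and then e_1. -/
import Mathlib


open Finset

/-- Two vertices of the convex `m`-gon are adjacent in the cyclic order. -/
def PolyAdj (m : ℕ) (a b : Fin m) : Prop :=
  (a.val + 1) % m = b.val ∨ (b.val + 1) % m = a.val

/-- `e` is a diagonal of the convex `m`-gon: an unordered pair of distinct,
non-adjacent vertices. -/
def IsDiagonal (m : ℕ) (e : Finset (Fin m)) : Prop :=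
  ∃ a b : Fin m, a ≠ b ∧ ¬ PolyAdj m a b ∧ e = {a, b}

/-- The cyclic distance from `a` to `x`, going forwards in the cyclic order. -/
def cycDist (m : ℕ) (a x : Fin m) : ℕ := (x.val + m - a.val) % m

/-- `x` lies strictly between `a` and `b` in the cyclic order. -/
def CycBtw (m : ℕ) (a x b : Fin m) : Prop :=
  0 < cycDist m a x ∧ cycDist m a x < cycDist m a b

/-- Two chords cross: their endpoints strictly interleave in the cyclic order. -/
def Cross (m : ℕ) (e₁ e₂ : Finset (Fin m)) : Prop :=
  ∃ a b c d : Fin m, e₁ = {a, b} ∧ e₂ = {c, d} ∧ CycBtw m a c b ∧ CycBtw m b d a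

/-- A triangulation of the convex `m`-gon: a maximal set of pairwise
non-crossing diagonals. -/
structure Triangulation (m : ℕ) where
  diagonals : Finset (Finset (Fin m))
  isDiagonal : ∀ e ∈ diagonals, IsDiagonal m e
  noncross : ∀ e₁ ∈ diagonals, ∀ e₂ ∈ diagonals, ¬ Cross m e₁ e₂
  maximal : ∀ e, IsDiagonal m e → (∀ e' ∈ diagonals, ¬ Cross m e e') → e ∈ diagonals

/-- `e` is a side in the triangulation `T`: either an edge of the polygon
(between cyclically adjacent vertices) or a diagonal of `T`. -/
def IsSide (m : ℕ) (T : Triangulation m) (e : Finset (Fin m)) : Prop :=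
  (∃ a b : Fin m, PolyAdj m a b ∧ e = {a, b}) ∨ e ∈ T.diagonals

/-- `t` is a triangle of the triangulation `T`: three distinct vertices each
pair of which forms a side of `T`. -/
def IsTriangle (m : ℕ) (T : Triangulation m) (t : Finset (Fin m)) : Prop :=
  ∃ a b c : Fin m, a ≠ b ∧ a ≠ c ∧ b ≠ c ∧ t = {a, b, c} ∧
    IsSide m T {a, b} ∧ IsSide m T {a, c} ∧ IsSide m T {b, c}

/-- Two diagonals of `T` are neighbors if they both belong to `T` and lie on a
common triangle of `T`; they are independent otherwise. -/
def Neighbor (m : ℕ) (T : Triangulation m) (e₁ e₂ : Finset (Fin m)) : Prop :=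
  e₁ ∈ T.diagonals ∧ e₂ ∈ T.diagonals ∧
    ∃ t, IsTriangle m T t ∧ e₁ ⊆ t ∧ e₂ ⊆ t

/-- `T'` is obtained from `T` by flipping the diagonal `e`, which removes `e`
and creates the new diagonal `e'` (necessarily the opposite diagonal of the
quadrilateral formed by the two triangles of `T` containing `e`, since `T'` is
again a triangulation). -/
def IsFlip (m : ℕ) (T T' : Triangulation m) (e e' : Finset (Fin m)) : Prop :=
  e ∈ T.diagonals ∧ e' ∉ T.diagonals ∧
    T'.diagonals = insert e' (T.diagonals.erase e)

/-- `Ts 0, Ts 1, …, Ts r` is a sequence of triangulations in which `Ts (i+1)`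
is obtained from `Ts i` by performing the flip `F i`, which removes the
diagonal `(F i).1` and creates the diagonal `(F i).2`. -/
def IsFlipSeq (m r : ℕ) (F : ℕ → Finset (Fin m) × Finset (Fin m))
    (Ts : ℕ → Triangulation m) : Prop :=
  ∀ i < r, IsFlip m (Ts i) (Ts (i + 1)) (F i).1 (F i).2

/-- The flip distance between two triangulations: the minimum length of a flip
sequence transforming one into the other. -/
noncomputable def FlipDist (m : ℕ) (T T' : Triangulation m) : ℕ :=
  sInf {r | ∃ F Ts, IsFlipSeq m r F Ts ∧ Ts 0 = T ∧ Ts r = T'}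

/-- `e` is a free-diagonal of `T` with respect to `Tfinal`: flipping `e` in `T`
creates a diagonal belonging to `Tfinal`. -/
def FreeDiagonal (m : ℕ) (T Tfinal : Triangulation m) (e : Finset (Fin m)) : Prop :=
  ∃ T' e', IsFlip m T T' e e' ∧ e' ∈ Tfinal.diagonals

/-- Arc of the DAG `D_F` associated to the flip sequence `F` with triangulation
sequence `Ts`: there is an arc from flip `i` to flip `j` when `i < j` and the
diagonal created by flip `i` is a neighbor of the diagonal removed by flip `j`
in the triangulation `Ts j` in which flip `j` is performed. -/
def Arc (m r : ℕ) (F : ℕ → Finset (Fin m) × Finset (Fin m))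
    (Ts : ℕ → Triangulation m) (i j : ℕ) : Prop :=
  i < j ∧ j < r ∧ Neighbor m (Ts j) (F i).2 (F j).1

section Aux
variable {m : ℕ}

lemma cycDist_spec (m : ℕ) (a x : Fin m) :
    (x.val = a.val + cycDist m a x ∨ x.val + m = a.val + cycDist m a x) ∧ cycDist m a x < m := by
  have ha := a.isLt; have hx := x.isLt
  unfold cycDist
  rcases le_or_gt a.val x.val with h | h
  · have e : (x.val + m - a.val) % m = x.val - a.val := by
      rw [show x.val + m - a.val = (x.val - a.val) + m by omega, Nat.add_mod_right]
      exact Nat.mod_eq_of_lt (by omega)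
    rw [e]; omega
  · have e : (x.val + m - a.val) % m = x.val + m - a.val := Nat.mod_eq_of_lt (by omega)
    rw [e]; omega

lemma polyAdj_iff (a b : Fin m) :
    PolyAdj m a b ↔ (a.val + 1 = b.val ∨ (a.val + 1 = m ∧ b.val = 0) ∨
      b.val + 1 = a.val ∨ (b.val + 1 = m ∧ a.val = 0)) := by
  have ha := a.isLt; have hb := b.isLt
  unfold PolyAdj
  have e1 : (a.val + 1) % m = if a.val + 1 = m then 0 else a.val + 1 := by
    split_ifs with h
    · rw [h, Nat.mod_self]
    · exact Nat.mod_eq_of_lt (by omega)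
  have e2 : (b.val + 1) % m = if b.val + 1 = m then 0 else b.val + 1 := by
    split_ifs with h
    · rw [h, Nat.mod_self]
    · exact Nat.mod_eq_of_lt (by omega)
  rw [e1, e2]; split_ifs <;> omega

lemma polyAdj_symm {a b : Fin m} (h : PolyAdj m a b) : PolyAdj m b a := h.symm

lemma pair_eq {α : Type*} [DecidableEq α] {a b c d : α}
    (h : ({a, b} : Finset α) = {c, d}) (hab : a ≠ b) :
    (a = c ∧ b = d) ∨ (a = d ∧ b = c) := by
  have ha : a ∈ ({c, d} : Finset α) := h ▸ Finset.mem_insert_self a {b}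
  have hb : b ∈ ({c, d} : Finset α) := h ▸ Finset.mem_insert_of_mem (Finset.mem_singleton_self b)
  have hc : c ∈ ({a, b} : Finset α) := h ▸ Finset.mem_insert_self c {d}
  simp only [Finset.mem_insert, Finset.mem_singleton] at ha hb hc
  by_cases hac : a = c
  · left
    refine ⟨hac, ?_⟩
    rcases hb with h' | h'
    · exact absurd (h'.trans hac.symm).symm hab
    · exact h'
  · right
    refine ⟨ha.resolve_left hac, ?_⟩
    rcases hc with h' | h'
    · exact absurd h'.symm hac
    · exact h'.symm

lemma cross_pair_iff (a b c d : Fin m) (hab : a ≠ b) (hcd : c ≠ d) :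
    Cross m {a, b} {c, d} ↔
      ((CycBtw m a c b ∧ CycBtw m b d a) ∨ (CycBtw m a d b ∧ CycBtw m b c a)) := by
  constructor
  · rintro ⟨α, β, γ, δ, h1, h2, h3, h4⟩
    rcases pair_eq h1 hab with ⟨rfl, rfl⟩ | ⟨rfl, rfl⟩ <;>
      rcases pair_eq h2 hcd with ⟨rfl, rfl⟩ | ⟨rfl, rfl⟩
    · exact Or.inl ⟨h3, h4⟩
    · exact Or.inr ⟨h3, h4⟩
    · exact Or.inr ⟨h4, h3⟩
    · exact Or.inl ⟨h4, h3⟩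
  · rintro (⟨h1, h2⟩ | ⟨h1, h2⟩)
    · exact ⟨a, b, c, d, rfl, rfl, h1, h2⟩
    · exact ⟨a, b, d, c, rfl, Finset.pair_comm c d, h1, h2⟩

lemma cycBtw_ne {a x b : Fin m} (h : CycBtw m a x b) : x ≠ a ∧ x ≠ b ∧ a ≠ b := by
  have s1 := cycDist_spec m a x
  have s2 := cycDist_spec m a b
  have ha := a.isLt; have hb := b.isLt; have hx := x.isLt
  unfold CycBtw at h
  refine ⟨fun h' => ?_, fun h' => ?_, fun h' => ?_⟩ <;>
    (apply_fun Fin.val at h') <;> omega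

lemma polyadj_no_cross {u v x y : Fin m} (hadj : PolyAdj m u v)
    (h1 : CycBtw m u x v) (h2 : CycBtw m v y u) : False := by
  rw [polyAdj_iff] at hadj
  have s1 := cycDist_spec m u x
  have s2 := cycDist_spec m u v
  have s3 := cycDist_spec m v y
  have s4 := cycDist_spec m v u
  have hu := u.isLt; have hv := v.isLt; have hx := x.isLt; have hy := y.isLt
  unfold CycBtw at h1 h2
  omega

lemma side_no_cross (T : Triangulation m) (s : Finset (Fin m)) (hs : IsSide m T s)
    (u v x y : Fin m) (huv : u ≠ v) (hsuv : s = {u, v})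
    (hd : s ∈ T.diagonals → ¬ Cross m s {x, y})
    (h1 : CycBtw m u x v) (h2 : CycBtw m v y u) : False := by
  rcases hs with ⟨u', v', hadj', heq⟩ | hmem
  · have : ({u, v} : Finset (Fin m)) = {u', v'} := hsuv ▸ heq
    rcases pair_eq this huv with ⟨rfl, rfl⟩ | ⟨rfl, rfl⟩
    · exact polyadj_no_cross hadj' h1 h2
    · exact polyadj_no_cross (polyAdj_symm hadj') h1 h2
  · exact hd hmem ⟨u, v, x, y, hsuv, rfl, h1, h2⟩

end Aux
section Apex
variable {m : ℕ}

lemma apex_aux (T : Triangulation m) (p q a u v : Fin m) (g : Finset (Fin m))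
    (he : {p, q} ∈ T.diagonals)
    (hba : CycBtw m p a q) (hpa : IsSide m T {p, a})
    (hg : g ∈ T.diagonals) (hguv : g = {u, v})
    (h1 : CycBtw m a u q) (h2 : CycBtw m q v a)
    (hmax : ∀ x, CycBtw m p x q → IsSide m T {p, x} → cycDist m p x ≤ cycDist m p a) :
    False := by
  have s1 := cycDist_spec m p a
  have s2 := cycDist_spec m p q
  have s3 := cycDist_spec m p u
  have s4 := cycDist_spec m p v
  have s5 := cycDist_spec m a u
  have s6 := cycDist_spec m a q
  have s7 := cycDist_spec m a p
  have s8 := cycDist_spec m q v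
  have s9 := cycDist_spec m q a
  have s10 := cycDist_spec m q p
  have hp := p.isLt; have hq := q.isLt; have ha := a.isLt
  have hu := u.isLt; have hv := v.isLt
  rcases lt_trichotomy (cycDist m q v) (cycDist m q p) with h | h | h
  · have hc : Cross m {p, q} g := by
      rw [hguv]
      exact ⟨p, q, u, v, rfl, rfl, by unfold CycBtw at *; omega, by unfold CycBtw at *; omega⟩
    exact T.noncross _ he _ hg hc
  · have hv' : v = p := Fin.ext (by unfold CycBtw at *; omega)
    have hu' : CycBtw m p u q := by unfold CycBtw at *; omega
    have hside : IsSide m T {p, u} := Or.inr (by rw [Finset.pair_comm p u, ← hv', ← hguv]; exact hg)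
    have := hmax u hu' hside
    unfold CycBtw at *; omega
  · refine side_no_cross T {p, a} hpa p a v u (cycBtw_ne hba).1.symm rfl (fun hm' => ?_) ?_ ?_
    · have hnc := T.noncross _ hm' _ hg
      rw [hguv, Finset.pair_comm u v] at hnc
      exact hnc
    · unfold CycBtw at *; omega
    · unfold CycBtw at *; omega

lemma apex_exists (hm : 3 ≤ m) (T : Triangulation m) (p q : Fin m)
    (hpq : p ≠ q) (hadj : ¬ PolyAdj m p q) (he : {p, q} ∈ T.diagonals) :
    ∃ a, CycBtw m p a q ∧ IsSide m T {p, a} ∧ IsSide m T {a, q} := by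
  classical
  have hm0 : 0 < m := by omega
  set S := Finset.univ.filter (fun a : Fin m => CycBtw m p a q ∧ IsSide m T {p, a}) with hS
  have hpqv : p.val ≠ q.val := fun h => hpq (Fin.ext h)
  have hd2 : 2 ≤ cycDist m p q := by
    have s1 := cycDist_spec m p q
    have := p.isLt; have := q.isLt
    rw [polyAdj_iff] at hadj
    omega
  let a₀ : Fin m := ⟨(p.val + 1) % m, Nat.mod_lt _ hm0⟩
  have ha₀v : a₀.val = p.val + 1 ∨ (p.val + 1 = m ∧ a₀.val = 0) := by
    have := p.isLt
    by_cases h : p.val + 1 = m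
    · exact Or.inr ⟨h, by show (p.val + 1) % m = 0; rw [h, Nat.mod_self]⟩
    · exact Or.inl (show (p.val + 1) % m = _ from Nat.mod_eq_of_lt (by omega))
  have ha₀btw : CycBtw m p a₀ q := by
    have s1 := cycDist_spec m p a₀
    have s2 := cycDist_spec m p q
    have := p.isLt; have := q.isLt; have := a₀.isLt
    unfold CycBtw; omega
  have ha₀side : IsSide m T {p, a₀} := Or.inl ⟨p, a₀, Or.inl rfl, rfl⟩
  have hSne : S.Nonempty :=
    ⟨a₀, Finset.mem_filter.2 ⟨Finset.mem_univ _, ha₀btw, ha₀side⟩⟩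
  obtain ⟨a, haS, hmax'⟩ := S.exists_max_image (fun x => cycDist m p x) hSne
  rw [Finset.mem_filter] at haS
  have hmax : ∀ x, CycBtw m p x q → IsSide m T {p, x} → cycDist m p x ≤ cycDist m p a :=
    fun x hx1 hx2 => hmax' x (Finset.mem_filter.2 ⟨Finset.mem_univ _, hx1, hx2⟩)
  refine ⟨a, haS.2.1, haS.2.2, ?_⟩
  by_cases hadj' : PolyAdj m a q
  · exact Or.inl ⟨a, q, hadj', rfl⟩
  by_cases hmem : {a, q} ∈ T.diagonals
  · exact Or.inr hmem
  exfalso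
  have haq : a ≠ q := (cycBtw_ne haS.2.1).2.1
  have hdiag : IsDiagonal m {a, q} := ⟨a, q, haq, hadj', rfl⟩
  have hex : ∃ g ∈ T.diagonals, Cross m {a, q} g := by
    by_contra hcon
    push_neg at hcon
    exact hmem (T.maximal _ hdiag hcon)
  obtain ⟨g, hg, hcr⟩ := hex
  obtain ⟨u₀, v₀, huv₀, _, hgeq⟩ := T.isDiagonal g hg
  rw [hgeq, cross_pair_iff a q u₀ v₀ haq huv₀] at hcr
  rcases hcr with ⟨hc1, hc2⟩ | ⟨hc1, hc2⟩
  · exact apex_aux T p q a u₀ v₀ g he haS.2.1 haS.2.2 hg hgeq hc1 hc2 hmax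
  · exact apex_aux T p q a v₀ u₀ g he haS.2.1 haS.2.2 hg
      (hgeq.trans (Finset.pair_comm u₀ v₀)) hc1 hc2 hmax

end Apex
section FlipChar
variable {m : ℕ}

lemma flip_char_core (T : Triangulation m) (p q a b x y : Fin m)
    (hpq : p ≠ q) (he : {p, q} ∈ T.diagonals)
    (ha : CycBtw m p a q) (hb : CycBtw m q b p)
    (hpa : IsSide m T {p, a}) (haq : IsSide m T {a, q})
    (hqb : IsSide m T {q, b}) (hbp : IsSide m T {b, p})
    (f : Finset (Fin m)) (hfeq : f = {x, y})
    (hxp : CycBtw m x p y) (hyq : CycBtw m y q x)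
    (hnc : ∀ g ∈ T.diagonals, g ≠ ({p, q} : Finset (Fin m)) → ¬ Cross m g f) :
    f = {a, b} := by
  have hp := p.isLt; have hq := q.isLt; have ha' := a.isLt
  have hb' := b.isLt; have hx' := x.isLt; have hy' := y.isLt
  have hy : CycBtw m p y q := by
    have t1 := cycDist_spec m x p; have t2 := cycDist_spec m x y
    have t3 := cycDist_spec m y q; have t4 := cycDist_spec m y x
    have t5 := cycDist_spec m p y; have t6 := cycDist_spec m p q
    unfold CycBtw at *; omega
  have hx : CycBtw m q x p := by
    have t1 := cycDist_spec m x p; have t2 := cycDist_spec m x y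
    have t3 := cycDist_spec m y q; have t4 := cycDist_spec m y x
    have t5 := cycDist_spec m q x; have t6 := cycDist_spec m q p
    unfold CycBtw at *; omega
  clear hxp hyq
  have hne_pa : ({p, a} : Finset (Fin m)) ≠ {p, q} := by
    intro h
    rcases pair_eq h (cycBtw_ne ha).1.symm with ⟨_, h2⟩ | ⟨h1, _⟩
    · exact (cycBtw_ne ha).2.1 h2
    · exact hpq h1
  have hne_aq : ({a, q} : Finset (Fin m)) ≠ {p, q} := by
    intro h
    rcases pair_eq h (cycBtw_ne ha).2.1 with ⟨h1, _⟩ | ⟨h1, h2⟩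
    · exact (cycBtw_ne ha).1 h1
    · exact hpq h2.symm
  have hne_qb : ({q, b} : Finset (Fin m)) ≠ {p, q} := by
    intro h
    rcases pair_eq h (cycBtw_ne hb).1.symm with ⟨h1, _⟩ | ⟨_, h2⟩
    · exact hpq h1.symm
    · exact (cycBtw_ne hb).2.1 h2
  have hne_bp : ({b, p} : Finset (Fin m)) ≠ {p, q} := by
    intro h
    rcases pair_eq h (cycBtw_ne hb).2.1 with ⟨h1, _⟩ | ⟨h1, _⟩
    · exact absurd h1 (cycBtw_ne hb).2.1
    · exact (cycBtw_ne hb).1 h1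
  have hya : y = a := by
    rcases lt_trichotomy (cycDist m p y) (cycDist m p a) with h | h | h
    · exfalso
      refine side_no_cross T {p, a} hpa p a y x (cycBtw_ne ha).1.symm rfl (fun hm' => ?_) ?_ ?_
      · have h' := hnc _ hm' hne_pa
        rw [hfeq, Finset.pair_comm x y] at h'
        exact h'
      · exact ⟨hy.1, h⟩
      · have t1 := cycDist_spec m a x; have t2 := cycDist_spec m a p
        have t3 := cycDist_spec m p a; have t4 := cycDist_spec m p q
        have t5 := cycDist_spec m q x; have t6 := cycDist_spec m q p
        unfold CycBtw at *; omega
    · have t1 := cycDist_spec m p y; have t2 := cycDist_spec m p a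
      exact Fin.ext (by unfold CycBtw at *; omega)
    · exfalso
      refine side_no_cross T {a, q} haq a q y x (cycBtw_ne ha).2.1 rfl (fun hm' => ?_) ?_ ?_
      · have h' := hnc _ hm' hne_aq
        rw [hfeq, Finset.pair_comm x y] at h'
        exact h'
      · have t1 := cycDist_spec m a y; have t2 := cycDist_spec m a q
        have t3 := cycDist_spec m p a; have t4 := cycDist_spec m p y
        have t5 := cycDist_spec m p q
        unfold CycBtw at *; omega
      · have t1 := cycDist_spec m q x; have t2 := cycDist_spec m q a
        have t3 := cycDist_spec m q p; have t4 := cycDist_spec m p a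
        have t5 := cycDist_spec m p q
        unfold CycBtw at *; omega
  have hxb : x = b := by
    rcases lt_trichotomy (cycDist m q x) (cycDist m q b) with h | h | h
    · exfalso
      refine side_no_cross T {q, b} hqb q b x y (cycBtw_ne hb).1.symm rfl (fun hm' => ?_) ?_ ?_
      · have h' := hnc _ hm' hne_qb
        rw [hfeq] at h'
        exact h'
      · exact ⟨hx.1, h⟩
      · have t1 := cycDist_spec m b y; have t2 := cycDist_spec m b q
        have t3 := cycDist_spec m q b; have t4 := cycDist_spec m q p
        have t5 := cycDist_spec m p y; have t6 := cycDist_spec m p q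
        have t7 := cycDist_spec m q y
        unfold CycBtw at *; omega
    · have t1 := cycDist_spec m q x; have t2 := cycDist_spec m q b
      exact Fin.ext (by unfold CycBtw at *; omega)
    · exfalso
      refine side_no_cross T {b, p} hbp b p x y (cycBtw_ne hb).2.1 rfl (fun hm' => ?_) ?_ ?_
      · have h' := hnc _ hm' hne_bp
        rw [hfeq] at h'
        exact h'
      · have t1 := cycDist_spec m b x; have t2 := cycDist_spec m b p
        have t3 := cycDist_spec m q b; have t4 := cycDist_spec m q x
        have t5 := cycDist_spec m q p
        unfold CycBtw at *; omega
      · have t1 := cycDist_spec m p y; have t2 := cycDist_spec m p b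
        have t3 := cycDist_spec m q b; have t4 := cycDist_spec m q p
        have t5 := cycDist_spec m p q
        unfold CycBtw at *; omega
  rw [hfeq, hxb, hya, Finset.pair_comm b a]

lemma flip_eq (T T' : Triangulation m) (e e' : Finset (Fin m))
    (hf : IsFlip m T T' e e') (p q a b : Fin m)
    (hpq : p ≠ q) (heq : e = {p, q})
    (ha : CycBtw m p a q) (hb : CycBtw m q b p)
    (hpa : IsSide m T {p, a}) (haq : IsSide m T {a, q})
    (hqb : IsSide m T {q, b}) (hbp : IsSide m T {b, p}) :
    e' = {a, b} := by
  obtain ⟨he, hnot, hTeq⟩ := hf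
  have he' : e' ∈ T'.diagonals := by rw [hTeq]; exact Finset.mem_insert_self _ _
  have hfd : IsDiagonal m e' := T'.isDiagonal e' he'
  have hmemT' : ∀ g ∈ T.diagonals, g ≠ e → g ∈ T'.diagonals := fun g hg hgne => by
    rw [hTeq]; exact Finset.mem_insert_of_mem (Finset.mem_erase.2 ⟨hgne, hg⟩)
  have hnc : ∀ g ∈ T.diagonals, g ≠ e → ¬ Cross m g e' :=
    fun g hg hgne => T'.noncross _ (hmemT' g hg hgne) _ he'
  have hc : Cross m e' e := by
    have hex : ∃ g ∈ T.diagonals, Cross m e' g := by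
      by_contra hcon
      push_neg at hcon
      exact hnot (T.maximal _ hfd hcon)
    obtain ⟨g, hg, hcr⟩ := hex
    by_cases hge : g = e
    · exact hge ▸ hcr
    · exact absurd hcr (T'.noncross _ he' _ (hmemT' g hg hge))
  obtain ⟨x₀, y₀, hxy₀, _, hfeq⟩ := hfd
  rw [hfeq] at hc
  rw [heq, cross_pair_iff x₀ y₀ p q hxy₀ hpq] at hc
  have hnc' : ∀ g ∈ T.diagonals, g ≠ ({p, q} : Finset (Fin m)) → ¬ Cross m g e' := by
    rw [← heq]; exact hnc
  have hepq : ({p, q} : Finset (Fin m)) ∈ T.diagonals := heq ▸ he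
  rcases hc with ⟨hc1, hc2⟩ | ⟨hc1, hc2⟩
  · exact flip_char_core T p q a b x₀ y₀ hpq hepq ha hb hpa haq hqb hbp e' hfeq hc1 hc2 hnc'
  · exact flip_char_core T p q a b y₀ x₀ hpq hepq ha hb hpa haq hqb hbp e'
      (hfeq.trans (Finset.pair_comm x₀ y₀)) hc2 hc1 hnc'

end FlipChar
section Main
variable {m : ℕ}

lemma not_nb (T : Triangulation m) (e₁ e₂ : Finset (Fin m))
    (h₁ : e₁ ∈ T.diagonals) (h₂ : e₂ ∈ T.diagonals) (hind : ¬ Neighbor m T e₁ e₂)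
    (r s c : Fin m) (hrs : e₂ = {r, s}) (hc : CycBtw m r c s)
    (hside1 : IsSide m T {r, c}) (hside2 : IsSide m T {c, s}) :
    ({r, c} : Finset (Fin m)) ≠ e₁ ∧ ({c, s} : Finset (Fin m)) ≠ e₁ := by
  have htri : IsTriangle m T {r, c, s} :=
    ⟨r, c, s, (cycBtw_ne hc).1.symm, (cycBtw_ne hc).2.2, (cycBtw_ne hc).2.1, rfl,
      hside1, Or.inr (hrs ▸ h₂), hside2⟩
  have hsub2 : e₂ ⊆ ({r, c, s} : Finset (Fin m)) := by
    rw [hrs]; intro x hx; simp only [Finset.mem_insert, Finset.mem_singleton] at hx ⊢; tauto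
  constructor <;> intro hEq <;> apply hind
  · exact ⟨h₁, h₂, {r, c, s}, htri, by
      rw [← hEq]; intro x hx
      simp only [Finset.mem_insert, Finset.mem_singleton] at hx ⊢; tauto, hsub2⟩
  · exact ⟨h₁, h₂, {r, c, s}, htri, by
      rw [← hEq]; intro x hx
      simp only [Finset.mem_insert, Finset.mem_singleton] at hx ⊢; tauto, hsub2⟩

lemma side_transfer (T T' : Triangulation m) (e e' g : Finset (Fin m))
    (hTeq : T'.diagonals = insert e' (T.diagonals.erase e))
    (hg : IsSide m T g) (hgne : g ≠ e) : IsSide m T' g := by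
  rcases hg with h | h
  · exact Or.inl h
  · exact Or.inr (by rw [hTeq]; exact Finset.mem_insert_of_mem (Finset.mem_erase.2 ⟨hgne, h⟩))

lemma tri_ext {T T' : Triangulation m} (h : T.diagonals = T'.diagonals) : T = T' := by
  cases T; cases T'; dsimp at h; subst h; rfl

end Main
/-- Let `T` be a triangulation of a convex polygon and let `e₁, e₂` be two
independent diagonals of `T`. Then `e₂` is still a diagonal of the
triangulation `T₁` obtained by flipping `e₁` in `T`, and flipping `e₁` and
then `e₂` yields the same triangulation as flipping `e₂` and then `e₁`. -/
theorem independent_flips_commute (m : ℕ) (hm : 3 ≤ m)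
    (T : Triangulation m) (e₁ e₂ : Finset (Fin m))
    (h₁ : e₁ ∈ T.diagonals) (h₂ : e₂ ∈ T.diagonals) (hne : e₁ ≠ e₂)
    (hind : ¬ Neighbor m T e₁ e₂)
    (T₁ : Triangulation m) (e₁' : Finset (Fin m)) (hf₁ : IsFlip m T T₁ e₁ e₁') :
    e₂ ∈ T₁.diagonals ∧
      ∀ (T₂ T₁₂ T₂₁ : Triangulation m) (e₂' e₂'' e₁'' : Finset (Fin m)),
        IsFlip m T T₂ e₂ e₂' → IsFlip m T₁ T₁₂ e₂ e₂'' →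
        IsFlip m T₂ T₂₁ e₁ e₁'' → T₁₂ = T₂₁ := by
  obtain ⟨hmem1, hnot1, hTeq1⟩ := hf₁
  have he₂T₁ : e₂ ∈ T₁.diagonals := by
    rw [hTeq1]
    exact Finset.mem_insert_of_mem (Finset.mem_erase.2 ⟨hne.symm, h₂⟩)
  refine ⟨he₂T₁, ?_⟩
  intro T₂ T₁₂ T₂₁ e₂' e₂'' e₁'' hF2 hF12 hF21
  obtain ⟨p, q, hpqne, hpqadj, hepq⟩ := T.isDiagonal e₁ h₁
  obtain ⟨r, s, hrsne, hrsadj, hers⟩ := T.isDiagonal e₂ h₂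
  have h₁' : ({p, q} : Finset (Fin m)) ∈ T.diagonals := hepq ▸ h₁
  have h₂' : ({r, s} : Finset (Fin m)) ∈ T.diagonals := hers ▸ h₂
  obtain ⟨c, hc_btw, h_rc, h_cs⟩ := apex_exists hm T r s hrsne hrsadj h₂'
  have h₂'' : ({s, r} : Finset (Fin m)) ∈ T.diagonals := Finset.pair_comm r s ▸ h₂'
  have hrsadj' : ¬ PolyAdj m s r := fun h => hrsadj (polyAdj_symm h)
  obtain ⟨d, hd_btw, h_sd, h_dr⟩ := apex_exists hm T s r hrsne.symm hrsadj' h₂''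
  obtain ⟨a, ha_btw, h_pa, h_aq⟩ := apex_exists hm T p q hpqne hpqadj h₁'
  have h₁'' : ({q, p} : Finset (Fin m)) ∈ T.diagonals := Finset.pair_comm p q ▸ h₁'
  have hpqadj' : ¬ PolyAdj m q p := fun h => hpqadj (polyAdj_symm h)
  obtain ⟨b, hb_btw, h_qb, h_bp⟩ := apex_exists hm T q p hpqne.symm hpqadj' h₁''
  have hind' : ¬ Neighbor m T e₂ e₁ := fun h => hind ⟨h.2.1, h.1, h.2.2.choose,
    h.2.2.choose_spec.1, h.2.2.choose_spec.2.2, h.2.2.choose_spec.2.1⟩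
  have nb1 := not_nb T e₁ e₂ h₁ h₂ hind r s c hers hc_btw h_rc h_cs
  have nb2 := not_nb T e₁ e₂ h₁ h₂ hind s r d (hers.trans (Finset.pair_comm r s))
    hd_btw h_sd h_dr
  have nb3 := not_nb T e₂ e₁ h₂ h₁ hind' p q a hepq ha_btw h_pa h_aq
  have nb4 := not_nb T e₂ e₁ h₂ h₁ hind' q p b (hepq.trans (Finset.pair_comm p q))
    hb_btw h_qb h_bp
  have he₂' : e₂' = {c, d} :=
    flip_eq T T₂ e₂ e₂' hF2 r s c d hrsne hers hc_btw hd_btw h_rc h_cs h_sd h_dr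
  have st1 : ∀ g, IsSide m T g → g ≠ e₁ → IsSide m T₁ g :=
    fun g hg hgne => side_transfer T T₁ e₁ e₁' g hTeq1 hg hgne
  have he₂'' : e₂'' = {c, d} :=
    flip_eq T₁ T₁₂ e₂ e₂'' hF12 r s c d hrsne hers hc_btw hd_btw
      (st1 _ h_rc nb1.1) (st1 _ h_cs nb1.2) (st1 _ h_sd nb2.1) (st1 _ h_dr nb2.2)
  have he₁' : e₁' = {a, b} :=
    flip_eq T T₁ e₁ e₁' ⟨hmem1, hnot1, hTeq1⟩ p q a b hpqne hepq ha_btw hb_btw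
      h_pa h_aq h_qb h_bp
  have st2 : ∀ g, IsSide m T g → g ≠ e₂ → IsSide m T₂ g :=
    fun g hg hgne => side_transfer T T₂ e₂ e₂' g hF2.2.2 hg hgne
  have he₁'' : e₁'' = {a, b} :=
    flip_eq T₂ T₂₁ e₁ e₁'' hF21 p q a b hpqne hepq ha_btw hb_btw
      (st2 _ h_pa nb3.1) (st2 _ h_aq nb3.2) (st2 _ h_qb nb4.1) (st2 _ h_bp nb4.2)
  have hX1 : ({c, d} : Finset (Fin m)) ≠ e₁ := fun h => hF2.2.1 (by rw [he₂', h]; exact h₁)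
  have hY2 : ({a, b} : Finset (Fin m)) ≠ e₂ := fun h => hnot1 (by rw [he₁', h]; exact h₂)
  apply tri_ext
  rw [hF12.2.2, hF21.2.2, hF2.2.2, hTeq1, he₂'', he₁'', he₂', he₁']
  ext x
  simp only [Finset.mem_insert, Finset.mem_erase]
  constructor
  · rintro (rfl | ⟨hx2, (rfl | ⟨hx1, hxT⟩)⟩)
    · exact Or.inr ⟨hX1, Or.inl rfl⟩
    · exact Or.inl rfl
    · exact Or.inr ⟨hx1, Or.inr ⟨hx2, hxT⟩⟩
  · rintro (rfl | ⟨hx1, (rfl | ⟨hx2, hxT⟩)⟩)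
    · exact Or.inr ⟨hY2, Or.inl rfl⟩
    · exact Or.inl rfl
    · exact Or.inr ⟨hx2, Or.inr ⟨hx1, hxT⟩⟩
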